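/- For Z ∈ Mat(n,ℍ) written as Z = A + jB, the complex determinant of σ(Z) = [[A, -conj(B)],[B, conj(A)]] is a nonnegative real number; consequently the Study determinant S.det(Z) := |det σ(Z)|² defines a monoid homomorphism Mat(n,ℍ) → ℝ≥0 whose restriction to GL(n,ℍ) is a group homomorphism onto the positive reals. -/

import Mathlib

noncomputable section
open Matrix Complex

namespace StudyDet
set_option linter.unusedSectionVars false
set_option maxHeartbeats 1000000

def c1 : Quaternion ℝ →+ ℂ where
  toFun q := ⟨q.re, q.imI⟩
  map_zero' := by simp [Complex.ext_iff, Quaternion.re_zero, Quaternion.imI_zero]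
  map_add' p q := by simp [Complex.ext_iff]

def c2 : Quaternion ℝ →+ ℂ where
  toFun q := ⟨q.imJ, -q.imK⟩
  map_zero' := by simp [Complex.ext_iff, Quaternion.imJ_zero, Quaternion.imK_zero]
  map_add' p q := by simp [Complex.ext_iff]; ring

@[simp] lemma c1_re (q : Quaternion ℝ) : (c1 q).re = q.re := rfl
@[simp] lemma c1_im (q : Quaternion ℝ) : (c1 q).im = q.imI := rfl
@[simp] lemma c2_re (q : Quaternion ℝ) : (c2 q).re = q.imJ := rfl
@[simp] lemma c2_im (q : Quaternion ℝ) : (c2 q).im = -q.imK := rfl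

@[simp] lemma c1_one : c1 1 = 1 := by simp [Complex.ext_iff, Quaternion.re_one, Quaternion.imI_one]
@[simp] lemma c2_one : c2 1 = 0 := by simp [Complex.ext_iff, Quaternion.imJ_one, Quaternion.imK_one]

lemma c1_mul (p q : Quaternion ℝ) :
    c1 (p * q) = c1 p * c1 q - (starRingEnd ℂ) (c2 p) * c2 q := by
  simp [Complex.ext_iff, Quaternion.re_mul, Quaternion.imI_mul, Complex.mul_re, Complex.mul_im]
  constructor <;> ring

lemma c2_mul (p q : Quaternion ℝ) :
    c2 (p * q) = c2 p * c1 q + (starRingEnd ℂ) (c1 p) * c2 q := by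
  simp [Complex.ext_iff, Quaternion.imJ_mul, Quaternion.imK_mul, Complex.mul_re, Complex.mul_im]
  constructor <;> ring

variable {k : Type} [Fintype k] [DecidableEq k]

def Sig (Z : Matrix k k (Quaternion ℝ)) : Matrix (k ⊕ k) (k ⊕ k) ℂ :=
  fromBlocks (Z.map c1) (-((Z.map c2).map (starRingEnd ℂ)))
    (Z.map c2) ((Z.map c1).map (starRingEnd ℂ))

lemma Sig_mul (Z W : Matrix k k (Quaternion ℝ)) : Sig (Z * W) = Sig Z * Sig W := by
  unfold Sig
  rw [fromBlocks_multiply]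
  have h1 : (Z * W).map c1 =
      Z.map c1 * W.map c1 + -((Z.map c2).map (starRingEnd ℂ)) * W.map c2 := by
    ext i j
    simp [Matrix.mul_apply, map_sum, c1_mul, Finset.sum_sub_distrib, sub_eq_add_neg,
      Finset.sum_add_distrib]
  have h2 : (Z * W).map c2 =
      Z.map c2 * W.map c1 + (Z.map c1).map (starRingEnd ℂ) * W.map c2 := by
    ext i j
    simp [Matrix.mul_apply, map_sum, c2_mul, Finset.sum_add_distrib]
  have h3 : -(((Z * W).map c2).map (starRingEnd ℂ)) =
      Z.map c1 * -((W.map c2).map (starRingEnd ℂ)) +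
        -((Z.map c2).map (starRingEnd ℂ)) * (W.map c1).map (starRingEnd ℂ) := by
    ext i j
    simp [Matrix.mul_apply, map_sum, c2_mul, Finset.sum_add_distrib, mul_comm]
    try ring_nf
  have h4 : ((Z * W).map c1).map (starRingEnd ℂ) =
      Z.map c2 * -((W.map c2).map (starRingEnd ℂ)) +
        (Z.map c1).map (starRingEnd ℂ) * (W.map c1).map (starRingEnd ℂ) := by
    ext i j
    simp [Matrix.mul_apply, map_sum, c1_mul, Finset.sum_sub_distrib, sub_eq_add_neg,
      Finset.sum_add_distrib, add_comm]
  rw [h3, h4, h1, h2]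


lemma vecMulVec_mul_vecMulVec {m : Type} [Fintype m] (u1 v1 u2 v2 : m → ℂ) :
    vecMulVec u1 v1 * vecMulVec u2 v2 = (v1 ⬝ᵥ u2) • vecMulVec u1 v2 := by
  ext i j
  simp [vecMulVec, Matrix.mul_apply, dotProduct, Finset.mul_sum, Finset.sum_mul]
  apply Finset.sum_congr rfl
  intro l _
  ring

lemma det_one_add_two (u1 v1 u2 v2 : k ⊕ k → ℂ)
    (h11 : v1 ⬝ᵥ u1 = 0) (h12 : v1 ⬝ᵥ u2 = 0) (h22 : v2 ⬝ᵥ u2 = 0) :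
    (1 + (vecMulVec u1 v1 + vecMulVec u2 v2)).det = 1 := by
  have hprod : (1 + vecMulVec u1 v1) * (1 + vecMulVec u2 v2) =
      1 + (vecMulVec u1 v1 + vecMulVec u2 v2) := by
    rw [mul_add, add_mul, add_mul]
    rw [vecMulVec_mul_vecMulVec u1 v1 u2 v2, h12]
    simp [add_assoc]
  rw [← hprod, det_mul, vecMulVec_eq Unit, vecMulVec_eq Unit,
    det_one_add_replicateCol_mul_replicateRow, det_one_add_replicateCol_mul_replicateRow, h11, h22]
  simp

lemma Sig_det_im (Z : Matrix k k (Quaternion ℝ)) : (Sig Z).det.im = 0 := by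
  set A := Z.map c1
  set B := Z.map c2
  set M := Sig Z with hM'
  have hM : M = fromBlocks A (-(B.map (starRingEnd ℂ))) B (A.map (starRingEnd ℂ)) := rfl
  set J : Matrix (k ⊕ k) (k ⊕ k) ℂ := fromBlocks 0 (-1) 1 0 with hJ
  have hJJ : J * J = -1 := by
    rw [hJ, fromBlocks_multiply]
    ext p q
    rcases p with i | i <;> rcases q with j | j <;>
      simp [fromBlocks, Matrix.one_apply]
  have hcomm : J * M.map (starRingEnd ℂ) = M * J := by
    have : M.map (starRingEnd ℂ) =
        fromBlocks (A.map (starRingEnd ℂ)) (-B) (B.map (starRingEnd ℂ)) A := by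
      ext p q
      rcases p with i | i <;> rcases q with j | j <;>
        simp [hM, fromBlocks]
    rw [this, hM, hJ, fromBlocks_multiply, fromBlocks_multiply]
    simp
  have hdetJ : J.det * J.det = 1 := by
    rw [← det_mul, hJJ]
    rw [det_neg]
    simp [Finset.card_univ, pow_mul', Fintype.card_sum]
  have h1 : J.det * (M.map (starRingEnd ℂ)).det = M.det * J.det := by
    rw [← det_mul, ← det_mul, hcomm]
  have h2 : (M.map (starRingEnd ℂ)).det = (starRingEnd ℂ) M.det :=
    ((starRingEnd ℂ).map_det M).symm
  have hJne : J.det ≠ 0 := by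
    intro h; rw [h, zero_mul] at hdetJ; exact zero_ne_one hdetJ
  have hc : (starRingEnd ℂ) M.det = M.det := by
    have h3 := h1
    rw [h2, mul_comm M.det] at h3
    exact mul_left_cancel₀ hJne h3
  exact Complex.conj_eq_iff_im.mp hc

lemma Sig_one_add (N : Matrix k k (Quaternion ℝ)) :
    Sig (1 + N) = 1 +
      fromBlocks (N.map c1) (-((N.map c2).map (starRingEnd ℂ)))
        (N.map c2) ((N.map c1).map (starRingEnd ℂ)) := by
  unfold Sig
  ext p q
  rcases p with i | i <;> rcases q with j | j <;>
    simp [fromBlocks, Matrix.one_apply, Matrix.map_apply, apply_ite c1, apply_ite c2,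
      apply_ite (starRingEnd ℂ), Matrix.add_apply]

lemma detSig_colOp (c : k → Quaternion ℝ) (x : k) (hc : c x = 0) :
    (Sig (1 + Matrix.of (fun i j => if j = x then c i else 0))).det = 1 := by
  set a : k → ℂ := fun i => c1 (c i) with ha
  set b : k → ℂ := fun i => c2 (c i) with hb
  have hax : a x = 0 := by simp [ha, hc]
  have hbx : b x = 0 := by simp [hb, hc]
  rw [Sig_one_add]
  have hblocks : fromBlocks
        ((Matrix.of (fun i j => if j = x then c i else 0)).map c1)
        (-(((Matrix.of (fun i j => if j = x then c i else 0)).map c2).map (starRingEnd ℂ)))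
        ((Matrix.of (fun i j => if j = x then c i else 0)).map c2)
        (((Matrix.of (fun i j => if j = x then c i else 0)).map c1).map (starRingEnd ℂ)) =
      vecMulVec (Sum.elim a b) (Sum.elim (Pi.single x 1) 0)
        + vecMulVec
            (Sum.elim (fun i => -(starRingEnd ℂ) (b i)) (fun i => (starRingEnd ℂ) (a i)))
            (Sum.elim 0 (Pi.single x 1)) := by
    ext p q
    rcases p with i | i <;> rcases q with j | j <;>
      simp [fromBlocks, vecMulVec, Matrix.map_apply, apply_ite c1, apply_ite c2,
        apply_ite (starRingEnd ℂ), Pi.single_apply, mul_ite, ite_mul, eq_comm] <;>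
      split <;> simp [ha, hb]
  rw [hblocks]
  apply det_one_add_two <;>
    simp [dotProduct, Fintype.sum_sum_type, Pi.single_apply, ite_mul, mul_ite, hax, hbx]

lemma detSig_rowOp (c : k → Quaternion ℝ) (x : k) (hc : c x = 0) :
    (Sig (1 + Matrix.of (fun i j => if i = x then c j else 0))).det = 1 := by
  set a : k → ℂ := fun i => c1 (c i) with ha
  set b : k → ℂ := fun i => c2 (c i) with hb
  have hax : a x = 0 := by simp [ha, hc]
  have hbx : b x = 0 := by simp [hb, hc]
  rw [Sig_one_add]
  have hblocks : fromBlocks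
        ((Matrix.of (fun i j => if i = x then c j else 0)).map c1)
        (-(((Matrix.of (fun i j => if i = x then c j else 0)).map c2).map (starRingEnd ℂ)))
        ((Matrix.of (fun i j => if i = x then c j else 0)).map c2)
        (((Matrix.of (fun i j => if i = x then c j else 0)).map c1).map (starRingEnd ℂ)) =
      vecMulVec (Sum.elim (Pi.single x 1) 0)
          (Sum.elim a (fun j => -(starRingEnd ℂ) (b j)))
        + vecMulVec (Sum.elim 0 (Pi.single x 1))
            (Sum.elim b (fun j => (starRingEnd ℂ) (a j))) := by
    ext p q
    rcases p with i | i <;> rcases q with j | j <;>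
      simp [fromBlocks, vecMulVec, Matrix.map_apply, apply_ite c1, apply_ite c2,
        apply_ite (starRingEnd ℂ), Pi.single_apply, mul_ite, ite_mul] <;>
      split <;> simp [ha, hb]
  rw [hblocks]
  apply det_one_add_two <;>
    simp [dotProduct, Fintype.sum_sum_type, Pi.single_apply, ite_mul, mul_ite, hax, hbx]

def eqv (x : k) : Fin 1 ⊕ {y : k // y ≠ x} ≃ k where
  toFun p := Sum.elim (fun _ => x) Subtype.val p
  invFun y := if h : y = x then Sum.inl 0 else Sum.inr ⟨y, h⟩
  left_inv := by
    rintro (a | ⟨y, hy⟩)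
    · simp [Fin.eq_zero a]
    · simp [hy]
  right_inv := by
    intro y
    by_cases h : y = x <;> simp [h]

lemma detSig_pivot (Z : Matrix k k (Quaternion ℝ)) (x : k)
    (hrow : ∀ j, j ≠ x → Z x j = 0) (hcol : ∀ i, i ≠ x → Z i x = 0) :
    (Sig Z).det =
      (c1 (Z x x) * (starRingEnd ℂ) (c1 (Z x x)) +
        (starRingEnd ℂ) (c2 (Z x x)) * c2 (Z x x)) *
        (Sig (Z.submatrix (Subtype.val : {y : k // y ≠ x} → k) Subtype.val)).det := by
  classical
  set u := Z x x with hu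
  set W := Z.submatrix (Subtype.val : {y : k // y ≠ x} → k) Subtype.val with hW
  set e := eqv x with he
  set E : (Fin 1 ⊕ Fin 1) ⊕ ({y : k // y ≠ x} ⊕ {y : k // y ≠ x}) ≃ k ⊕ k :=
    (Equiv.sumSumSumComm (Fin 1) (Fin 1) {y : k // y ≠ x} {y : k // y ≠ x}).trans
      (e.sumCongr e) with hE
  set M2 : Matrix (Fin 1 ⊕ Fin 1) (Fin 1 ⊕ Fin 1) ℂ :=
    fromBlocks (Matrix.of fun _ _ => c1 u) (Matrix.of fun _ _ => -(starRingEnd ℂ) (c2 u))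
      (Matrix.of fun _ _ => c2 u) (Matrix.of fun _ _ => (starRingEnd ℂ) (c1 u)) with hM2
  have hr1 : ∀ y : {y : k // y ≠ x}, c1 (Z x ↑y) = 0 := fun y => by rw [hrow _ y.2]; simp
  have hr2 : ∀ y : {y : k // y ≠ x}, c2 (Z x ↑y) = 0 := fun y => by rw [hrow _ y.2]; simp
  have hc1 : ∀ y : {y : k // y ≠ x}, c1 (Z ↑y x) = 0 := fun y => by rw [hcol _ y.2]; simp
  have hc2 : ∀ y : {y : k // y ≠ x}, c2 (Z ↑y x) = 0 := fun y => by rw [hcol _ y.2]; simp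
  have hsub : (Sig Z).submatrix E E = fromBlocks M2 0 0 (Sig W) := by
    ext p q
    rcases p with (a | a) | (y | y) <;> rcases q with (b | b) | (z | z) <;>
      simp [hE, he, eqv, Sig, hM2, fromBlocks, Equiv.sumSumSumComm, hW,
        hr1, hr2, hc1, hc2, hu]
  have hdet1 : (Sig Z).det = ((Sig Z).submatrix E E).det :=
    (Matrix.det_submatrix_equiv_self E (Sig Z)).symm
  have hM2det : M2.det = c1 u * (starRingEnd ℂ) (c1 u) + (starRingEnd ℂ) (c2 u) * c2 u := by
    have h1 : M2.det = (M2.submatrix (finSumFinEquiv (m := 1) (n := 1)).symm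
        (finSumFinEquiv (m := 1) (n := 1)).symm).det :=
      (Matrix.det_submatrix_equiv_self _ M2).symm
    have h2 : M2.submatrix (finSumFinEquiv (m := 1) (n := 1)).symm
        (finSumFinEquiv (m := 1) (n := 1)).symm =
        !![c1 u, -(starRingEnd ℂ) (c2 u); c2 u, (starRingEnd ℂ) (c1 u)] := by
      have e0 : (finSumFinEquiv (m := 1) (n := 1)).symm 0 = Sum.inl 0 := rfl
      have e1 : (finSumFinEquiv (m := 1) (n := 1)).symm 1 = Sum.inr 0 := rfl
      ext i j
      fin_cases i <;> fin_cases j <;>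
        simp [hM2, fromBlocks, e0, e1]
    rw [h1, h2, Matrix.det_fin_two_of]
    ring
  rw [hdet1, hsub, Matrix.det_fromBlocks_zero₂₁, hM2det]

lemma detSig_nonneg_aux : ∀ (N : ℕ) (k : Type) (_ : Fintype k) (_ : DecidableEq k),
    Fintype.card k = N → ∀ Z : Matrix k k (Quaternion ℝ), 0 ≤ (Sig Z).det.re := by
  intro N
  induction N using Nat.strong_induction_on with
  | _ N IH =>
    intro k _ _ hcard Z
    rcases Nat.eq_zero_or_pos N with h0 | hpos
    · haveI : IsEmpty k := Fintype.card_eq_zero_iff.mp (hcard.trans h0)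
      rw [Matrix.det_isEmpty]
      norm_num
    · have hne : Nonempty k := Fintype.card_pos_iff.mp (hcard ▸ hpos)
      obtain ⟨x⟩ := hne
      by_cases hcol0 : ∀ i, Z i x = 0
      · have hz : (Sig Z).det = 0 := by
          apply Matrix.det_eq_zero_of_column_eq_zero (Sum.inl x)
          intro p
          rcases p with i | i <;> simp [Sig, fromBlocks, hcol0 i]
        simp [hz]
      · push_neg at hcol0
        obtain ⟨i0, hi0⟩ := hcol0
        -- Step 1: nonzero pivot
        obtain ⟨Z₁, hZ1det, hZ1xx⟩ : ∃ Z₁ : Matrix k k (Quaternion ℝ),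
            (Sig Z₁).det = (Sig Z).det ∧ Z₁ x x ≠ 0 := by
          by_cases hxx : Z x x = 0
          · have hix : i0 ≠ x := by
              rintro rfl; exact hi0 hxx
            set c : k → Quaternion ℝ := Pi.single i0 1 with hcdef
            have hcx : c x = 0 := by simp [hcdef, Pi.single_apply, hix.symm]
            set T : Matrix k k (Quaternion ℝ) :=
              1 + Matrix.of (fun i j => if i = x then c j else 0) with hT
            refine ⟨T * Z, ?_, ?_⟩
            · rw [Sig_mul, det_mul, detSig_rowOp c x hcx, one_mul]
            · have : (T * Z) x x = Z x x + Z i0 x := by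
                simp [hT, Matrix.add_mul, Matrix.mul_apply, hcdef, Pi.single_apply,
                  Matrix.one_apply, ite_mul, Matrix.add_apply, add_mul,
                  Finset.sum_add_distrib]
              rw [this, hxx, zero_add]
              exact hi0
          · exact ⟨Z, rfl, hxx⟩
        set u := Z₁ x x with hu
        -- Step 2: clear the column
        set cP : k → Quaternion ℝ := fun i => if i = x then 0 else -(Z₁ i x) * u⁻¹ with hcP
        have hcPx : cP x = 0 := by simp [hcP]
        set P : Matrix k k (Quaternion ℝ) :=
          1 + Matrix.of (fun i j => if j = x then cP i else 0) with hP
        set Z₂ := P * Z₁ with hZ2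
        have hZ2det : (Sig Z₂).det = (Sig Z).det := by
          rw [hZ2, Sig_mul, det_mul, detSig_colOp cP x hcPx, one_mul, hZ1det]
        have hZ2col : ∀ i, i ≠ x → Z₂ i x = 0 := by
          intro i hix
          have : Z₂ i x = Z₁ i x + cP i * u := by
            simp [hZ2, hP, Matrix.add_mul, Matrix.mul_apply, Matrix.one_apply, ite_mul,
              Matrix.add_apply, hu]
          rw [this, hcP]
          simp only [if_neg hix]
          rw [neg_mul, neg_mul, mul_assoc, inv_mul_cancel₀ hZ1xx, mul_one]
          simp
        have hZ2xx : Z₂ x x = u := by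
          have : Z₂ x x = Z₁ x x + cP x * u := by
            simp [hZ2, hP, Matrix.add_mul, Matrix.mul_apply, Matrix.one_apply, ite_mul,
              Matrix.add_apply, hu]
          rw [this, hcPx, zero_mul, add_zero, hu]
        -- Step 3: clear the row
        set cQ : k → Quaternion ℝ := fun j => if j = x then 0 else -(u⁻¹ * Z₂ x j) with hcQ
        have hcQx : cQ x = 0 := by simp [hcQ]
        set Q : Matrix k k (Quaternion ℝ) :=
          1 + Matrix.of (fun i j => if i = x then cQ j else 0) with hQ
        set Z₃ := Z₂ * Q with hZ3
        have hZ3det : (Sig Z₃).det = (Sig Z).det := by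
          rw [hZ3, Sig_mul, det_mul, detSig_rowOp cQ x hcQx, mul_one, hZ2det]
        have hmulQ : ∀ i j, Z₃ i j = Z₂ i j + Z₂ i x * cQ j := by
          intro i j
          simp [hZ3, hQ, Matrix.mul_add, Matrix.mul_apply, Matrix.one_apply, mul_ite,
            Matrix.add_apply, ite_mul]
        have hZ3row : ∀ j, j ≠ x → Z₃ x j = 0 := by
          intro j hjx
          rw [hmulQ, hZ2xx, hcQ]
          simp only [if_neg hjx]
          rw [mul_neg, ← mul_assoc, mul_inv_cancel₀ hZ1xx, one_mul]
          simp
        have hZ3col : ∀ i, i ≠ x → Z₃ i x = 0 := by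
          intro i hix
          rw [hmulQ, hcQx, mul_zero, add_zero]
          exact hZ2col i hix
        -- Step 4: pivot decomposition and induction
        have hpiv := detSig_pivot Z₃ x hZ3row hZ3col
        set W := Z₃.submatrix (Subtype.val : {y : k // y ≠ x} → k) Subtype.val with hWdef
        have hcard' : Fintype.card {y : k // y ≠ x} = N - 1 := by
          rw [← hcard]
          simp [Fintype.card_subtype_compl]
        have hlt : N - 1 < N := Nat.sub_lt hpos one_pos
        have hIH : 0 ≤ (Sig W).det.re := IH (N - 1) hlt _ _ _ hcard' W
        have him : (Sig W).det.im = 0 := Sig_det_im W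
        have hfac : (c1 (Z₃ x x) * (starRingEnd ℂ) (c1 (Z₃ x x)) +
            (starRingEnd ℂ) (c2 (Z₃ x x)) * c2 (Z₃ x x)) =
            ((Complex.normSq (c1 (Z₃ x x)) + Complex.normSq (c2 (Z₃ x x)) : ℝ) : ℂ) := by
          rw [mul_comm ((starRingEnd ℂ) (c2 (Z₃ x x))), Complex.mul_conj, Complex.mul_conj]
          push_cast
          ring
        rw [← hZ3det, hpiv, hfac]
        rw [Complex.mul_re]
        simp only [him, Complex.ofReal_re, Complex.ofReal_im, zero_mul, mul_zero, sub_zero]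
        exact mul_nonneg (add_nonneg (Complex.normSq_nonneg _) (Complex.normSq_nonneg _)) hIH

end StudyDet

open StudyDet in
/-- For `Z ∈ Mat(n, ℍ)`, the complex determinant of the symplectic image `σ(Z)` is a
nonnegative real number; consequently the Study determinant
`S.det(Z) := |det σ(Z)|²` is a monoid homomorphism `Mat(n,ℍ) → ℝ≥0` whose restriction
to `GL(n,ℍ)` is a group homomorphism onto the positive reals. -/
theorem study_determinant
    (n : ℕ) (hn : 1 ≤ n)
    (σ : Matrix (Fin n) (Fin n) (Quaternion ℝ) →ₐ[ℝ]
      Matrix (Fin n ⊕ Fin n) (Fin n ⊕ Fin n) ℂ)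
    (hσinj : Function.Injective σ)
    (hσ : ∀ A B : Matrix (Fin n) (Fin n) ℂ,
      σ (Matrix.of fun p q =>
          (⟨(A p q).re, (A p q).im, (B p q).re, -(B p q).im⟩ : Quaternion ℝ)) =
        Matrix.fromBlocks A (-(B.map (starRingEnd ℂ))) B (A.map (starRingEnd ℂ))) :
    let Sdet : Matrix (Fin n) (Fin n) (Quaternion ℝ) → ℝ :=
      fun Z => Complex.normSq ((σ Z).det)
    (∀ Z, ((σ Z).det).im = 0 ∧ 0 ≤ ((σ Z).det).re) ∧
      Sdet 1 = 1 ∧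
      (∀ Z W, Sdet (Z * W) = Sdet Z * Sdet W) ∧
      (∀ Z, IsUnit Z → 0 < Sdet Z) ∧
      (∀ r : ℝ, 0 < r → ∃ Z, IsUnit Z ∧ Sdet Z = r) := by
  intro Sdet
  have hσSig : ∀ Z : Matrix (Fin n) (Fin n) (Quaternion ℝ), σ Z = Sig Z := by
    intro Z
    have h := hσ (Z.map c1) (Z.map c2)
    have hZ : (Matrix.of fun p q =>
        (⟨((Z.map c1) p q).re, ((Z.map c1) p q).im,
          ((Z.map c2) p q).re, -((Z.map c2) p q).im⟩ : Quaternion ℝ)) = Z := by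
      ext p q <;> simp [Matrix.map_apply]
    exact ((congrArg σ hZ).symm.trans h).trans rfl
  refine ⟨?_, ?_, ?_, ?_, ?_⟩
  · intro Z
    rw [hσSig]
    exact ⟨Sig_det_im Z, detSig_nonneg_aux n (Fin n) _ _ (Fintype.card_fin n) Z⟩
  · show Complex.normSq ((σ 1).det) = 1
    rw [_root_.map_one, Matrix.det_one, _root_.map_one]
  · intro Z W
    show Complex.normSq ((σ (Z * W)).det) =
      Complex.normSq ((σ Z).det) * Complex.normSq ((σ W).det)
    rw [_root_.map_mul, Matrix.det_mul, _root_.map_mul]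
  · intro Z hZ
    show 0 < Complex.normSq ((σ Z).det)
    apply Complex.normSq_pos.mpr
    exact ((Matrix.isUnit_iff_isUnit_det _).mp (hZ.map σ)).ne_zero
  · intro r hr
    have hnn : (n + n : ℕ) ≠ 0 := by omega
    set t : ℝ := Real.sqrt (r ^ (((n + n : ℕ) : ℝ))⁻¹) with htdef
    have hrp : 0 < r ^ (((n + n : ℕ) : ℝ))⁻¹ := Real.rpow_pos_of_pos hr _
    have ht : 0 < t := Real.sqrt_pos.mpr hrp
    refine ⟨t • 1, ?_, ?_⟩
    · refine ⟨⟨t • 1, t⁻¹ • 1, ?_, ?_⟩, rfl⟩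
      · rw [smul_mul_assoc, one_mul, smul_smul, mul_inv_cancel₀ ht.ne', one_smul]
      · rw [smul_mul_assoc, one_mul, smul_smul, inv_mul_cancel₀ ht.ne', one_smul]
    · show Complex.normSq ((σ (t • 1)).det) = r
      rw [_root_.map_smul, _root_.map_one]
      have hsm : (t • (1 : Matrix (Fin n ⊕ Fin n) (Fin n ⊕ Fin n) ℂ)) = ((t : ℂ)) • 1 := by
        ext p q
        simp [Matrix.smul_apply, Complex.real_smul]
      rw [hsm, Matrix.det_smul, Matrix.det_one, mul_one]
      have hcard : Fintype.card (Fin n ⊕ Fin n) = n + n := by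
        simp [Fintype.card_sum]
      rw [hcard, map_pow, Complex.normSq_ofReal, ← pow_two]
      have ht2 : t ^ 2 = r ^ (((n + n : ℕ) : ℝ))⁻¹ := Real.sq_sqrt hrp.le
      calc (t ^ 2) ^ (n + n) = (r ^ (((n + n : ℕ) : ℝ))⁻¹) ^ (n + n) := by rw [ht2]
        _ = r := Real.rpow_inv_natCast_pow hr.le hnn
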